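/- Suppose X* is an optimal solution of min_{X∈F_{n,k}} f(X) satisfying the eigen-gap assumption with parameter δ > 0. Then for any X ∈ F_{n,k} and any V ∈ argmin_{P∈P_{n,k}} ⟨P, ∇f(X)⟩, it holds that ‖V − X*‖_F² ≤ 16·β²·(f(X) − f(X*))/δ³. In particular, this bound holds for the rank-k matrices V_t produced at every iteration t ≥ 1 of the Frank-Wolfe method applied to min_{X∈F_{n,k}} f(X). -/

import Mathlib

open Matrix

noncomputable def frobNorm {m : ℕ} (A : Matrix (Fin m) (Fin m) ℝ) : ℝ :=
  Real.sqrt (∑ i, ∑ j, (A i j) ^ 2)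

/-- `eigval A j` is the `j`-th largest eigenvalue (1-indexed) of the symmetric matrix `A`. -/
noncomputable def eigval {m : ℕ} (A : Matrix (Fin m) (Fin m) ℝ) (j : ℕ) : ℝ :=
  if h : A.IsHermitian then
    if hj : m - j < m then (h.eigenvalues ∘ Tuple.sort h.eigenvalues) ⟨m - j, hj⟩ else 0
  else 0

/-- spectral norm: largest singular value. -/
noncomputable def specNorm {m : ℕ} (A : Matrix (Fin m) (Fin m) ℝ) : ℝ :=
  Real.sqrt (eigval (Aᵀ * A) 1)

/-- `P_{n,k}`: rank-`k` orthogonal projection matrices. -/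
def ProjSet (n k : ℕ) : Set (Matrix (Fin n) (Fin n) ℝ) :=
  {X | ∃ Q : Matrix (Fin n) (Fin k) ℝ, Qᵀ * Q = 1 ∧ X = Q * Qᵀ}

/-- The Fantope `F_{n,k}`. -/
def Fantope (n k : ℕ) : Set (Matrix (Fin n) (Fin n) ℝ) :=
  {X | X.IsSymm ∧ X.PosSemidef ∧ (1 - X).PosSemidef ∧ X.trace = (k : ℝ)}

lemma frobNorm_nonneg {m : ℕ} (A : Matrix (Fin m) (Fin m) ℝ) : 0 ≤ frobNorm A :=
  Real.sqrt_nonneg _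

lemma frobNorm_sq {m : ℕ} (A : Matrix (Fin m) (Fin m) ℝ) :
    frobNorm A ^ 2 = ∑ i, ∑ j, (A i j) ^ 2 := by
  rw [frobNorm, Real.sq_sqrt]
  exact Finset.sum_nonneg fun i _ => Finset.sum_nonneg fun j _ => sq_nonneg _

lemma trace_mul_sum {m : ℕ} (A B : Matrix (Fin m) (Fin m) ℝ) :
    (A * B).trace = ∑ i, ∑ j, A i j * B j i := by
  simp [Matrix.trace, Matrix.mul_apply, Matrix.diag]

lemma frobNorm_prod {m : ℕ} (A : Matrix (Fin m) (Fin m) ℝ) :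
    frobNorm A = Real.sqrt (∑ p : Fin m × Fin m, (A p.1 p.2) ^ 2) := by
  rw [frobNorm, Fintype.sum_prod_type]

lemma cs_ineq' {m : ℕ} (A B : Matrix (Fin m) (Fin m) ℝ) :
    ∑ i, ∑ j, A i j * B i j ≤ frobNorm A * frobNorm B := by
  rw [frobNorm_prod, frobNorm_prod]
  have h : ∑ i, ∑ j, A i j * B i j = ∑ p : Fin m × Fin m, A p.1 p.2 * B p.1 p.2 :=
    (Fintype.sum_prod_type (fun p : Fin m × Fin m => A p.1 p.2 * B p.1 p.2)).symm
  rw [h]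
  exact Real.sum_mul_le_sqrt_mul_sqrt Finset.univ _ _

lemma cs_ineq {m : ℕ} (A B : Matrix (Fin m) (Fin m) ℝ) :
    |∑ i, ∑ j, A i j * B i j| ≤ frobNorm A * frobNorm B := by
  rw [abs_le]
  constructor
  · have := cs_ineq' (-A) B
    have hn : frobNorm (-A) = frobNorm A := by
      simp [frobNorm]
    simp only [Matrix.neg_apply, neg_mul, Finset.sum_neg_distrib, hn] at this
    linarith
  · exact cs_ineq' A B

lemma psd_diag_nonneg {m : ℕ} {M : Matrix (Fin m) (Fin m) ℝ} (hM : M.PosSemidef) (i : Fin m) :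
    0 ≤ M i i := by
  have := hM.dotProduct_mulVec_nonneg (Pi.single i 1)
  simpa [Matrix.mulVec_single, dotProduct, Pi.single_apply] using this

lemma psd_row_zero {m : ℕ} {M : Matrix (Fin m) (Fin m) ℝ} (hM : M.PosSemidef) (i : Fin m)
    (hii : M i i = 0) (j : Fin m) : M i j = 0 := by
  rcases eq_or_ne i j with rfl | hij
  · exact hii
  have hsymm : M j i = M i j := by
    have h := congrFun (congrFun hM.1 i) j
    simpa [Matrix.conjTranspose_apply] using h
  have quad : ∀ t : ℝ, 0 ≤ M j j + 2 * t * M i j := by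
    intro t
    have key := hM.dotProduct_mulVec_nonneg (fun l => (if l = j then (1:ℝ) else 0) + t * (if l = i then 1 else 0))
    set x : Fin m → ℝ := fun l => (if l = j then (1:ℝ) else 0) + t * (if l = i then 1 else 0)
      with hx
    have hstar : star x = x := by ext l; simp [hx]
    have hMv : ∀ l, (M *ᵥ x) l = M l j + t * M l i := by
      intro l
      simp [Matrix.mulVec, dotProduct, hx, mul_add, mul_comm,
        Finset.sum_add_distrib, Finset.mul_sum, mul_ite, Finset.sum_ite_eq',
        Finset.mem_univ]
    have hexp : x ⬝ᵥ (M *ᵥ x) = M j j + t * M j i + t * M i j + t * t * M i i := by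
      rw [dotProduct]
      simp only [hMv]
      rw [hx]
      rw [Finset.sum_congr rfl (fun l _ => by split_ifs <;> ring :
        ∀ l ∈ Finset.univ,
          ((if l = j then (1:ℝ) else 0) + t * (if l = i then 1 else 0)) * (M l j + t * M l i)
          = (if l = j then (M l j + t * M l i) else 0)
            + t * (if l = i then (M l j + t * M l i) else 0))]
      rw [Finset.sum_add_distrib]
      rw [Finset.sum_ite_eq' Finset.univ j (fun l => M l j + t * M l i), ← Finset.mul_sum,
        Finset.sum_ite_eq' Finset.univ i (fun l => M l j + t * M l i)]
      simp
      ring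
    rw [hstar, hexp, hii, hsymm] at key
    linarith
  by_contra hne
  have h1 := quad (-(M j j + 1) / (2 * M i j))
  have h2 : 2 * (-(M j j + 1) / (2 * M i j)) * M i j = -(M j j + 1) := by
    field_simp
  rw [h2] at h1
  linarith

lemma real_conjTranspose {a b : ℕ} (A : Matrix (Fin a) (Fin b) ℝ) : Aᴴ = Aᵀ := by
  ext i j; simp [Matrix.conjTranspose_apply]

lemma frob_sq_trace {m : ℕ} (A : Matrix (Fin m) (Fin m) ℝ) :
    frobNorm A ^ 2 = (Aᵀ * A).trace := by
  rw [frobNorm_sq, trace_mul_sum, Finset.sum_comm]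
  congr 1; ext i; congr 1; ext j
  simp [Matrix.transpose_apply, sq]

lemma frob_eq_sqrt_sq {m : ℕ} (A : Matrix (Fin m) (Fin m) ℝ) :
    frobNorm A = Real.sqrt (frobNorm A ^ 2) :=
  (Real.sqrt_sq (frobNorm_nonneg A)).symm

lemma frob_smul {m : ℕ} (t : ℝ) (ht : 0 ≤ t) (A : Matrix (Fin m) (Fin m) ℝ) :
    frobNorm (t • A) = t * frobNorm A := by
  rw [frobNorm, frobNorm]
  have : ∀ i j, ((t • A) i j) ^ 2 = t ^ 2 * (A i j) ^ 2 := by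
    intro i j; simp [Matrix.smul_apply]; ring
  simp only [this, ← Finset.mul_sum]
  rw [Real.sqrt_mul (sq_nonneg t), Real.sqrt_sq ht]

lemma proj_mem_fantope {n k : ℕ} (hkn : k ≤ n) : ProjSet n k ⊆ Fantope n k := by
  rintro X ⟨Q, hQ, rfl⟩
  have hsymm : (Q * Qᵀ).IsSymm := by
    rw [Matrix.IsSymm, Matrix.transpose_mul, Matrix.transpose_transpose]
  have hpsd : (Q * Qᵀ).PosSemidef := by
    have := Matrix.posSemidef_self_mul_conjTranspose Q
    rwa [real_conjTranspose] at this
  have hidem : (Q * Qᵀ) * (Q * Qᵀ) = Q * Qᵀ := by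
    rw [Matrix.mul_assoc, ← Matrix.mul_assoc Qᵀ, hQ, Matrix.one_mul]
  have h1 : (1 - Q * Qᵀ).PosSemidef := by
    have heq : (1 - Q * Qᵀ)ᴴ * (1 - Q * Qᵀ) = 1 - Q * Qᵀ := by
      rw [real_conjTranspose]
      rw [Matrix.transpose_sub, Matrix.transpose_one, Matrix.transpose_mul,
        Matrix.transpose_transpose]
      rw [sub_mul, one_mul, mul_sub, mul_one, hidem]
      abel
    rw [← heq]
    exact Matrix.posSemidef_conjTranspose_mul_self _
  refine ⟨hsymm, hpsd, h1, ?_⟩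
  rw [Matrix.trace_mul_comm, hQ, Matrix.trace_one]
  simp

lemma conj_mem_fantope {n k : ℕ} {W : Matrix (Fin n) (Fin n) ℝ}
    (h1 : Wᵀ * W = 1) (h2 : W * Wᵀ = 1) {Y : Matrix (Fin n) (Fin n) ℝ}
    (hY : Y ∈ Fantope n k) : Wᵀ * Y * W ∈ Fantope n k := by
  obtain ⟨hs, hp, hq, htr⟩ := hY
  refine ⟨?_, ?_, ?_, ?_⟩
  · rw [Matrix.IsSymm, Matrix.transpose_mul, Matrix.transpose_mul,
      Matrix.transpose_transpose, hs.eq, mul_assoc]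
  · have := hp.conjTranspose_mul_mul_same W
    rwa [real_conjTranspose] at this
  · have heq : Wᵀ * (1 - Y) * W = 1 - Wᵀ * Y * W := by
      rw [mul_sub, sub_mul, mul_one, h1]
    have := hq.conjTranspose_mul_mul_same W
    rwa [real_conjTranspose, heq] at this
  · rw [Matrix.trace_mul_cycle, h2, one_mul, htr]

lemma frob_conj {n : ℕ} {W : Matrix (Fin n) (Fin n) ℝ}
    (h1 : Wᵀ * W = 1) (h2 : W * Wᵀ = 1) (M : Matrix (Fin n) (Fin n) ℝ) :
    frobNorm (Wᵀ * M * W) = frobNorm M := by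
  rw [frob_eq_sqrt_sq, frob_sq_trace]
  have : (Wᵀ * M * W)ᵀ * (Wᵀ * M * W) = Wᵀ * (Mᵀ * M) * W := by
    rw [Matrix.transpose_mul, Matrix.transpose_mul, Matrix.transpose_transpose]
    simp only [mul_assoc]
    rw [← mul_assoc W Wᵀ (M * W), h2, one_mul]
  rw [this, Matrix.trace_mul_cycle, ← mul_assoc, h2, one_mul, ← frob_sq_trace,
    Real.sqrt_sq (frobNorm_nonneg M)]

lemma eigen_decomp {m : ℕ} {G : Matrix (Fin m) (Fin m) ℝ} (h : G.IsHermitian) :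
    ∃ W : Matrix (Fin m) (Fin m) ℝ, Wᵀ * W = 1 ∧ W * Wᵀ = 1 ∧
      G = W * Matrix.diagonal (h.eigenvalues ∘ Tuple.sort h.eigenvalues) * Wᵀ := by
  set U : Matrix (Fin m) (Fin m) ℝ := (h.eigenvectorUnitary : Matrix (Fin m) (Fin m) ℝ) with hU
  have hU2 : U * Uᵀ = 1 := by
    have := (Matrix.mem_unitaryGroup_iff).mp h.eigenvectorUnitary.2
    rwa [Matrix.star_eq_conjTranspose, real_conjTranspose] at this
  have hU1 : Uᵀ * U = 1 := by
    have := (Matrix.mem_unitaryGroup_iff').mp h.eigenvectorUnitary.2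
    rwa [Matrix.star_eq_conjTranspose, real_conjTranspose] at this
  have hspec : G = U * Matrix.diagonal h.eigenvalues * Uᵀ := by
    have := h.spectral_theorem
    rwa [Unitary.conjStarAlgAut_apply, Matrix.star_eq_conjTranspose, real_conjTranspose,
      show (RCLike.ofReal ∘ h.eigenvalues : Fin m → ℝ) = h.eigenvalues from funext fun i => rfl]
      at this
  set σ := Tuple.sort h.eigenvalues with hσ
  refine ⟨U.submatrix id σ, ?_, ?_, ?_⟩
  · ext a b
    have key := congrFun (congrFun hU1 (σ a)) (σ b)
    rw [Matrix.mul_apply] at key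
    rw [Matrix.mul_apply]
    simp only [Matrix.transpose_apply, Matrix.submatrix_apply, id] at key ⊢
    rw [key]
    simp [Matrix.one_apply, σ.injective.eq_iff]
  · ext a b
    have key := congrFun (congrFun hU2 a) b
    rw [Matrix.mul_apply] at key
    rw [Matrix.mul_apply]
    simp only [Matrix.transpose_apply, Matrix.submatrix_apply, id] at key ⊢
    rw [← key]
    exact (Equiv.sum_comp σ (fun j => U a j * U b j)).symm ▸
      (Equiv.sum_comp σ (fun j => U a j * U b j))
  · ext a b
    have hG : G a b = ∑ j, U a j * h.eigenvalues j * U b j := by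
      have hab := congrFun (congrFun hspec a) b
      rw [Matrix.mul_apply] at hab
      simp only [Matrix.mul_diagonal, Matrix.transpose_apply] at hab
      exact hab
    rw [hG, Matrix.mul_apply]
    simp only [Matrix.mul_diagonal, Matrix.transpose_apply, Matrix.submatrix_apply, id,
      Function.comp_apply]
    exact (Equiv.sum_comp σ (fun j => U a j * h.eigenvalues j * U b j)).symm

lemma trace_diag_mul {m : ℕ} (d : Fin m → ℝ) (M : Matrix (Fin m) (Fin m) ℝ) :
    (Matrix.diagonal d * M).trace = ∑ i, d i * M i i := by
  simp [Matrix.trace, Matrix.diag, Matrix.diagonal_mul]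

lemma fantope_diag_nonneg {n k : ℕ} {Y : Matrix (Fin n) (Fin n) ℝ} (hY : Y ∈ Fantope n k)
    (i : Fin n) : 0 ≤ Y i i := psd_diag_nonneg hY.2.1 i

lemma fantope_diag_le_one {n k : ℕ} {Y : Matrix (Fin n) (Fin n) ℝ} (hY : Y ∈ Fantope n k)
    (i : Fin n) : Y i i ≤ 1 := by
  have := psd_diag_nonneg hY.2.2.1 i
  simp only [Matrix.sub_apply, Matrix.one_apply_eq] at this
  linarith

lemma trace_mul_psd_nonneg {m : ℕ} {A B : Matrix (Fin m) (Fin m) ℝ}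
    (hA : A.PosSemidef) (hB : B.PosSemidef) : 0 ≤ (A * B).trace := by
  obtain ⟨C, hC⟩ : ∃ C : Matrix (Fin m) (Fin m) ℝ, B = Cᴴ * C := by
    obtain ⟨W, -, -, hW⟩ := eigen_decomp hB.1
    refine ⟨Matrix.diagonal (fun i => Real.sqrt ((hB.1.eigenvalues ∘ Tuple.sort hB.1.eigenvalues) i)) * Wᵀ, ?_⟩
    rw [real_conjTranspose, Matrix.transpose_mul, Matrix.transpose_transpose,
      Matrix.diagonal_transpose, ← Matrix.mul_assoc, Matrix.mul_assoc W,
      Matrix.diagonal_mul_diagonal]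
    refine hW.trans ?_
    congr 2
    congr 1
    funext i
    exact (Real.mul_self_sqrt (hB.eigenvalues_nonneg _)).symm
  rw [real_conjTranspose] at hC
  rw [hC, ← Matrix.mul_assoc, Matrix.trace_mul_cycle]
  have hP : (C * A * Cᵀ).PosSemidef := by
    have := hA.mul_mul_conjTranspose_same C
    rwa [real_conjTranspose] at this
  calc (0:ℝ) = ∑ i : Fin m, 0 := by simp
  _ ≤ ∑ i, (C * A * Cᵀ) i i := Finset.sum_le_sum fun i _ => psd_diag_nonneg hP i
  _ = (C * A * Cᵀ).trace := rfl

lemma fantope_sq_trace_le {n k : ℕ} {Y : Matrix (Fin n) (Fin n) ℝ} (hY : Y ∈ Fantope n k) :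
    (Y * Y).trace ≤ Y.trace := by
  have h := trace_mul_psd_nonneg hY.2.1 hY.2.2.1
  rw [mul_sub, mul_one, Matrix.trace_sub] at h
  linarith

/-- indicator vector of the first `k` coordinates -/
def evec (n k : ℕ) : Fin n → ℝ := fun i => if (i : ℕ) < k then 1 else 0

def Emat (n k : ℕ) : Matrix (Fin n) (Fin k) ℝ := fun i j => if (i : ℕ) = (j : ℕ) then 1 else 0

lemma Emat_orth {n k : ℕ} (hkn : k ≤ n) : (Emat n k)ᵀ * Emat n k = 1 := by
  ext a b
  rw [Matrix.mul_apply]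
  have key : ∀ i : Fin n, (Emat n k)ᵀ a i * Emat n k i b
      = if i = (⟨a, lt_of_lt_of_le a.2 hkn⟩ : Fin n) then (if (a:ℕ) = (b:ℕ) then 1 else 0) else 0 := by
    intro i
    simp only [Matrix.transpose_apply, Emat]
    rcases eq_or_ne i (⟨a, lt_of_lt_of_le a.2 hkn⟩ : Fin n) with rfl | hne
    · simp
    · have : (i : ℕ) ≠ (a : ℕ) := fun h => hne (Fin.ext h)
      simp [this, hne]
  simp only [key, Finset.sum_ite_eq' Finset.univ, Finset.mem_univ, if_true]
  by_cases hab : a = b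
  · subst hab; simp [Matrix.one_apply]
  · have : (a:ℕ) ≠ (b:ℕ) := fun h => hab (Fin.ext h)
    simp [Matrix.one_apply, hab, this]

lemma Emat_proj {n k : ℕ} (hkn : k ≤ n) :
    Emat n k * (Emat n k)ᵀ = Matrix.diagonal (evec n k) := by
  ext i i'
  rw [Matrix.mul_apply]
  by_cases hi : (i : ℕ) < k
  · have key : ∀ j : Fin k, Emat n k i j * (Emat n k)ᵀ j i'
        = if j = (⟨i, hi⟩ : Fin k) then (if (i':ℕ) = (i:ℕ) then 1 else 0) else 0 := by
      intro j
      simp only [Matrix.transpose_apply, Emat]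
      rcases eq_or_ne j (⟨i, hi⟩ : Fin k) with rfl | hne
      · simp [eq_comm]
      · have : (i : ℕ) ≠ (j : ℕ) := fun h => hne (Fin.ext h.symm)
        simp [this, hne]
    simp only [key, Finset.sum_ite_eq' Finset.univ, Finset.mem_univ, if_true]
    by_cases hii : i = i'
    · subst hii; simp [Matrix.diagonal_apply, evec, hi]
    · have : (i':ℕ) ≠ (i:ℕ) := fun h => hii (Fin.ext h.symm)
      simp [Matrix.diagonal_apply, hii, this, Ne.symm hii]
  · have key : ∀ j : Fin k, Emat n k i j * (Emat n k)ᵀ j i' = 0 := by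
      intro j
      simp only [Matrix.transpose_apply, Emat]
      have : (i : ℕ) ≠ (j : ℕ) := by
        intro h; exact hi (h ▸ j.2)
      simp [this]
    simp only [key, Finset.sum_const_zero]
    rcases eq_or_ne i i' with rfl | hne
    · simp [Matrix.diagonal_apply, evec, hi]
    · simp [Matrix.diagonal_apply, hne]

lemma sum_evec {n k : ℕ} (hkn : k ≤ n) : ∑ i, evec n k i = (k : ℝ) := by
  have h : (Matrix.diagonal (evec n k)).trace = ∑ i, evec n k i := by
    simp [Matrix.trace_diagonal]
  rw [← h, ← Emat_proj hkn, Matrix.trace_mul_comm, Emat_orth hkn, Matrix.trace_one]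
  simp

lemma diagproj_mem_proj {n k : ℕ} (hkn : k ≤ n) {W : Matrix (Fin n) (Fin n) ℝ}
    (h1 : Wᵀ * W = 1) :
    W * Matrix.diagonal (evec n k) * Wᵀ ∈ ProjSet n k := by
  refine ⟨W * Emat n k, ?_, ?_⟩
  · rw [Matrix.transpose_mul, Matrix.mul_assoc, ← Matrix.mul_assoc Wᵀ, h1,
      Matrix.one_mul, Emat_orth hkn]
  · rw [Matrix.transpose_mul, ← Matrix.mul_assoc, Matrix.mul_assoc W (Emat n k),
      Emat_proj hkn]

lemma trace_eq_sum_diag {m : ℕ} (M : Matrix (Fin m) (Fin m) ℝ) : M.trace = ∑ i, M i i := rfl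

lemma core_ineq {n k : ℕ} (hk : 0 < k) (hkn : k < n) (μ : Fin n → ℝ) (hmono : Monotone μ)
    {δ : ℝ} (hgap : δ ≤ μ ⟨k, hkn⟩ - μ ⟨k - 1, by omega⟩)
    {M : Matrix (Fin n) (Fin n) ℝ} (hM : M ∈ Fantope n k) :
    δ * ((k : ℝ) - ∑ i, evec n k i * M i i) ≤
      (∑ i, μ i * M i i) - ∑ i, μ i * evec n k i := by
  set a : Fin n := ⟨k - 1, by omega⟩
  set b : Fin n := ⟨k, hkn⟩
  set T := ∑ i, evec n k i * M i i with hT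
  have htr : ∑ i, M i i = (k : ℝ) := by rw [← trace_eq_sum_diag]; exact hM.2.2.2
  have hs : (0:ℝ) ≤ (k : ℝ) - T := by
    have : (k:ℝ) - T = ∑ i, evec n k i * (1 - M i i) := by
      rw [← sum_evec hkn.le (k := k)]
      rw [← Finset.sum_sub_distrib]
      congr 1; ext i; ring
    rw [this]
    exact Finset.sum_nonneg fun i _ => mul_nonneg
      (by by_cases h : (i:ℕ) < k <;> simp [evec, h])
      (by linarith [fantope_diag_le_one hM i])
  have hterm : ∀ i : Fin n,
      evec n k i * (μ a * (M i i - 1)) + (1 - evec n k i) * (μ b * M i i)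
        ≤ μ i * (M i i - evec n k i) := by
    intro i
    by_cases h : (i : ℕ) < k
    · have he : evec n k i = 1 := by simp [evec, h]
      rw [he]
      have hμ : μ i ≤ μ a := hmono (by simp [a, Fin.le_def]; omega)
      have hMle : M i i - 1 ≤ 0 := by linarith [fantope_diag_le_one hM i]
      nlinarith
    · have he : evec n k i = 0 := by simp [evec, h]
      rw [he]
      have hμ : μ b ≤ μ i := hmono (by simp [b, Fin.le_def]; omega)
      have hMge : 0 ≤ M i i := fantope_diag_nonneg hM i
      nlinarith
  have hsum := Finset.sum_le_sum (fun i (_ : i ∈ Finset.univ) => hterm i)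
  have hlhs : ∑ i, (evec n k i * (μ a * (M i i - 1)) + (1 - evec n k i) * (μ b * M i i))
      = μ a * (T - k) + μ b * ((k:ℝ) - T) := by
    have expand : ∀ i : Fin n,
        evec n k i * (μ a * (M i i - 1)) + (1 - evec n k i) * (μ b * M i i)
        = μ a * (evec n k i * M i i) - μ a * evec n k i + μ b * M i i
          - μ b * (evec n k i * M i i) := by intro i; ring
    simp only [expand, Finset.sum_sub_distrib, Finset.sum_add_distrib, ← Finset.mul_sum]
    rw [sum_evec hkn.le, htr, ← hT]
    ring
  have hrhs : ∑ i, μ i * (M i i - evec n k i) = (∑ i, μ i * M i i) - ∑ i, μ i * evec n k i := by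
    rw [← Finset.sum_sub_distrib]; congr 1; ext i; ring
  rw [hlhs, hrhs] at hsum
  have : δ * ((k:ℝ) - T) ≤ μ a * (T - k) + μ b * ((k:ℝ) - T) := by nlinarith
  linarith

lemma fantope_eq_diag {n k : ℕ} (hkn : k ≤ n) {M : Matrix (Fin n) (Fin n) ℝ}
    (hM : M ∈ Fantope n k) (h1 : ∀ i : Fin n, (i : ℕ) < k → M i i = 1) :
    M = Matrix.diagonal (evec n k) := by
  have htr : ∑ i, M i i = (k : ℝ) := by rw [← trace_eq_sum_diag]; exact hM.2.2.2
  have hT : ∑ i, evec n k i * M i i = (k:ℝ) := by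
    have : ∀ i : Fin n, evec n k i * M i i = evec n k i := by
      intro i
      by_cases h : (i:ℕ) < k
      · simp [evec, h, h1 i h]
      · simp [evec, h]
    simp only [this]
    exact sum_evec hkn
  have hzero : ∀ i : Fin n, ¬ (i:ℕ) < k → M i i = 0 := by
    intro i hi
    have hsum0 : ∑ j, (1 - evec n k j) * M j j = 0 := by
      have : ∀ j : Fin n, (1 - evec n k j) * M j j = M j j - evec n k j * M j j := by
        intro j; ring
      simp only [this]
      rw [Finset.sum_sub_distrib, htr, hT]; ring
    have hnn : ∀ j ∈ Finset.univ, 0 ≤ (1 - evec n k j) * M j j := by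
      intro j _
      apply mul_nonneg
      · by_cases h : (j:ℕ) < k <;> simp [evec, h]
      · exact fantope_diag_nonneg hM j
    have := (Finset.sum_eq_zero_iff_of_nonneg hnn).mp hsum0 i (Finset.mem_univ i)
    rw [show (1 - evec n k i) = 1 by simp [evec, hi]] at this
    linarith
  ext i j
  by_cases hi : (i : ℕ) < k
  · have hrow := psd_row_zero hM.2.2.1 i (by
      simp only [Matrix.sub_apply, Matrix.one_apply_eq]
      rw [h1 i hi]; ring) j
    simp only [Matrix.sub_apply] at hrow
    have : M i j = (1 : Matrix (Fin n) (Fin n) ℝ) i j := by linarith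
    rw [this, Matrix.diagonal_apply, Matrix.one_apply]
    rcases eq_or_ne i j with rfl | hne
    · simp [evec, hi]
    · simp [hne]
  · have hrow := psd_row_zero hM.2.1 i (hzero i hi) j
    rw [hrow, Matrix.diagonal_apply]
    rcases eq_or_ne i j with rfl | hne
    · simp [evec, hi]
    · simp [hne]

lemma psd_smul {m : ℕ} {M : Matrix (Fin m) (Fin m) ℝ} (hM : M.PosSemidef) {c : ℝ}
    (hc : 0 ≤ c) : (c • M).PosSemidef := by
  constructor
  · have h := hM.1
    rw [Matrix.IsHermitian] at h ⊢
    rw [real_conjTranspose] at h ⊢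
    rw [Matrix.transpose_smul, h]
  · exact (hM.smul hc).2

lemma fantope_convex {n k : ℕ} {X Y : Matrix (Fin n) (Fin n) ℝ}
    (hX : X ∈ Fantope n k) (hY : Y ∈ Fantope n k) {t : ℝ} (ht0 : 0 ≤ t) (ht1 : t ≤ 1) :
    X + t • (Y - X) ∈ Fantope n k := by
  have hrw : X + t • (Y - X) = (1 - t) • X + t • Y := by
    rw [smul_sub, sub_smul, one_smul]; abel
  have hrw2 : 1 - (X + t • (Y - X)) = (1 - t) • (1 - X) + t • (1 - Y) := by
    rw [smul_sub, smul_sub, sub_smul, one_smul, smul_sub, sub_smul, one_smul]; abel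
  refine ⟨?_, ?_, ?_, ?_⟩
  · rw [Matrix.IsSymm] at *
    rw [Matrix.transpose_add, Matrix.transpose_smul, Matrix.transpose_sub, hX.1, hY.1]
  · rw [hrw]
    exact ((psd_smul hX.2.1 (by linarith)).add (psd_smul hY.2.1 ht0))
  · rw [hrw2]
    exact ((psd_smul hX.2.2.1 (by linarith)).add (psd_smul hY.2.2.1 ht0))
  · rw [Matrix.trace_add, Matrix.trace_smul, Matrix.trace_sub, hX.2.2.2, hY.2.2.2]
    simp

lemma inner_transform {n : ℕ} {W : Matrix (Fin n) (Fin n) ℝ} (μ : Fin n → ℝ)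
    (Y : Matrix (Fin n) (Fin n) ℝ) :
    (W * Matrix.diagonal μ * Wᵀ * Y).trace = ∑ i, μ i * (Wᵀ * Y * W) i i := by
  rw [Matrix.mul_assoc (W * Matrix.diagonal μ), Matrix.trace_mul_comm,
    ← Matrix.mul_assoc, Matrix.trace_mul_comm, trace_diag_mul]

lemma frob_bound_diag {n k : ℕ} (hkn : k ≤ n) {M : Matrix (Fin n) (Fin n) ℝ}
    (hM : M ∈ Fantope n k) :
    frobNorm (M - Matrix.diagonal (evec n k)) ^ 2 ≤
      2 * ((k : ℝ) - ∑ i, evec n k i * M i i) := by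
  rw [frobNorm_sq]
  have hexp : ∀ i j, (M - Matrix.diagonal (evec n k)) i j ^ 2
      = M i j ^ 2 - 2 * M i j * Matrix.diagonal (evec n k) i j
        + Matrix.diagonal (evec n k) i j ^ 2 := by
    intro i j; rw [Matrix.sub_apply]; ring
  simp only [hexp, Finset.sum_add_distrib, Finset.sum_sub_distrib]
  have hcross : ∀ i : Fin n, ∑ j, 2 * M i j * Matrix.diagonal (evec n k) i j
      = 2 * M i i * evec n k i := by
    intro i
    rw [Finset.sum_eq_single i
      (fun b _ hb => by simp [Matrix.diagonal_apply, Ne.symm hb])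
      (fun h => absurd (Finset.mem_univ i) h)]
    simp [Matrix.diagonal_apply]
  have hdiagsq : ∀ i : Fin n, ∑ j, Matrix.diagonal (evec n k) i j ^ 2 = evec n k i := by
    intro i
    rw [Finset.sum_eq_single i
      (fun b _ hb => by simp [Matrix.diagonal_apply, Ne.symm hb])
      (fun h => absurd (Finset.mem_univ i) h)]
    by_cases hik : (i:ℕ) < k <;> simp [Matrix.diagonal_apply, evec, hik]
  have hMsq : ∑ i : Fin n, ∑ j, M i j ^ 2 ≤ (k : ℝ) := by
    have h1 : ∑ i : Fin n, ∑ j, M i j ^ 2 = (Mᵀ * M).trace := by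
      rw [← frob_sq_trace, frobNorm_sq]
    rw [h1, hM.1.eq]
    calc (M * M).trace ≤ M.trace := fantope_sq_trace_le hM
    _ = (k : ℝ) := hM.2.2.2
  have h2 : ∑ i : Fin n, 2 * M i i * evec n k i = 2 * ∑ i, evec n k i * M i i := by
    rw [Finset.mul_sum]; congr 1; ext i; ring
  rw [Finset.sum_congr rfl fun i _ => hcross i, Finset.sum_congr rfl fun i _ => hdiagsq i,
    h2, sum_evec hkn]
  linarith

lemma trace_abs_le {m : ℕ} (A : Matrix (Fin m) (Fin m) ℝ) {d : Matrix (Fin m) (Fin m) ℝ}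
    (hd : d.IsSymm) : |(A * d).trace| ≤ frobNorm A * frobNorm d := by
  rw [trace_mul_sum]
  have : ∀ i j, A i j * d j i = A i j * d i j := by
    intro i j
    have := congrFun (congrFun hd i) j
    rw [Matrix.transpose_apply] at this
    rw [this]
  simp only [this]
  exact cs_ineq A d

lemma frob_sub_comm {m : ℕ} (A B : Matrix (Fin m) (Fin m) ℝ) :
    frobNorm (A - B) = frobNorm (B - A) := by
  rw [frobNorm, frobNorm]
  congr 1
  congr 1; ext i; congr 1; ext j
  rw [Matrix.sub_apply, Matrix.sub_apply]
  ring

lemma conj_conj {m : ℕ} {W : Matrix (Fin m) (Fin m) ℝ} (h1 : Wᵀ * W = 1)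
    (A : Matrix (Fin m) (Fin m) ℝ) : Wᵀ * (W * A * Wᵀ) * W = A := by
  rw [Matrix.mul_assoc W A, ← Matrix.mul_assoc Wᵀ W, h1, Matrix.one_mul,
    Matrix.mul_assoc A, h1, Matrix.mul_one]

lemma conj_conj' {m : ℕ} {W : Matrix (Fin m) (Fin m) ℝ} (h2 : W * Wᵀ = 1)
    (A : Matrix (Fin m) (Fin m) ℝ) : W * (Wᵀ * A * W) * Wᵀ = A := by
  rw [Matrix.mul_assoc Wᵀ A, ← Matrix.mul_assoc W Wᵀ, h2, Matrix.one_mul,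
    Matrix.mul_assoc A, h2, Matrix.mul_one]

lemma s_nonneg {n k : ℕ} {M : Matrix (Fin n) (Fin n) ℝ} (hM : M ∈ Fantope n k) :
    0 ≤ (k : ℝ) - ∑ i, evec n k i * M i i := by
  have htr : ∑ i, M i i = (k : ℝ) := by rw [← trace_eq_sum_diag]; exact hM.2.2.2
  have : (k:ℝ) - ∑ i, evec n k i * M i i = ∑ i, (1 - evec n k i) * M i i := by
    rw [← htr, ← Finset.sum_sub_distrib]
    congr 1; ext i; ring
  rw [this]
  exact Finset.sum_nonneg fun i _ => mul_nonneg
    (by by_cases h : (i:ℕ) < k <;> simp [evec, h]) (fantope_diag_nonneg hM i)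

lemma issymm_sub {m : ℕ} {A B : Matrix (Fin m) (Fin m) ℝ} (hA : A.IsSymm) (hB : B.IsSymm) :
    (A - B).IsSymm := by
  rw [Matrix.IsSymm, Matrix.transpose_sub, hA.eq, hB.eq]

lemma first_order {n k : ℕ}
    (f : Matrix (Fin n) (Fin n) ℝ → ℝ)
    (grad : Matrix (Fin n) (Fin n) ℝ → Matrix (Fin n) (Fin n) ℝ)
    (β : ℝ) (hβ : 0 < β)
    (hconv : ∀ X Y : Matrix (Fin n) (Fin n) ℝ, X.IsSymm → Y.IsSymm →
      f X + (grad X * (Y - X)).trace ≤ f Y)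
    (hsmooth : ∀ X Y : Matrix (Fin n) (Fin n) ℝ, X.IsSymm → Y.IsSymm →
      frobNorm (grad X - grad Y) ≤ β * frobNorm (X - Y))
    (Xstar : Matrix (Fin n) (Fin n) ℝ)
    (hXstarMem : Xstar ∈ Fantope n k)
    (hXstarOpt : ∀ X ∈ Fantope n k, f Xstar ≤ f X) :
    ∀ Y ∈ Fantope n k, 0 ≤ (grad Xstar * (Y - Xstar)).trace := by
  intro Y hY
  set d := Y - Xstar with hd
  have hdsymm : d.IsSymm := issymm_sub hY.1 hXstarMem.1
  have key : ∀ t : ℝ, 0 < t → t ≤ 1 → -(β * t * frobNorm d ^ 2) ≤ (grad Xstar * d).trace := by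
    intro t ht0 ht1
    set Z := Xstar + t • d with hZ
    have hZFan : Z ∈ Fantope n k := fantope_convex hXstarMem hY ht0.le ht1
    have hZsymm : Z.IsSymm := hZFan.1
    have hZX : Z - Xstar = t • d := by rw [hZ]; abel
    have hstep1 : 0 ≤ (grad Z * d).trace := by
      have hc := hconv Z Xstar hZsymm hXstarMem.1
      have hXZ : Xstar - Z = -(t • d) := by rw [hZ]; abel
      rw [hXZ] at hc
      have : (grad Z * -(t • d)).trace = -(t * (grad Z * d).trace) := by
        rw [Matrix.mul_neg, Matrix.trace_neg, Matrix.mul_smul, Matrix.trace_smul]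
        simp
      rw [this] at hc
      have hopt := hXstarOpt Z hZFan
      nlinarith
    have hcsbound : |((grad Z - grad Xstar) * d).trace| ≤ β * t * frobNorm d ^ 2 := by
      calc |((grad Z - grad Xstar) * d).trace| ≤ frobNorm (grad Z - grad Xstar) * frobNorm d :=
            trace_abs_le _ hdsymm
      _ ≤ (β * frobNorm (Z - Xstar)) * frobNorm d := by
            apply mul_le_mul_of_nonneg_right _ (frobNorm_nonneg d)
            exact hsmooth Z Xstar hZsymm hXstarMem.1
      _ = β * t * frobNorm d ^ 2 := by
            rw [hZX, frob_smul t ht0.le]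
            ring
    have hsplit : ((grad Z - grad Xstar) * d).trace
        = (grad Z * d).trace - (grad Xstar * d).trace := by
      rw [Matrix.sub_mul, Matrix.trace_sub]
    rw [abs_le] at hcsbound
    linarith [hcsbound.2, hcsbound.1]
  by_contra hneg
  push_neg at hneg
  set c := (grad Xstar * d).trace with hc
  set q := β * frobNorm d ^ 2 + 1 with hq
  have hqpos : 0 < q := by positivity
  have htpos : 0 < min 1 ((-c) / q) := by
    apply lt_min one_pos
    apply div_pos (by linarith) hqpos
  have htle : min 1 ((-c) / q) ≤ 1 := min_le_left _ _
  have hk := key _ htpos htle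
  have h2 : β * min 1 ((-c) / q) * frobNorm d ^ 2 ≤ β * ((-c)/q) * frobNorm d ^ 2 := by
    apply mul_le_mul_of_nonneg_right _ (sq_nonneg _)
    exact mul_le_mul_of_nonneg_left (min_le_right _ _) hβ.le
  have h3 : β * ((-c)/q) * frobNorm d ^ 2 < -c := by
    have hfrac : β * frobNorm d ^ 2 / q < 1 := by
      rw [div_lt_one hqpos, hq]; linarith
    have heq : β * ((-c)/q) * frobNorm d ^ 2 = (β * frobNorm d ^ 2 / q) * (-c) := by ring
    rw [heq]
    nlinarith
  linarith

set_option maxHeartbeats 1000000 in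
theorem stmt5 {n k : ℕ} (hk : 0 < k) (hkn : k < n)
    (f : Matrix (Fin n) (Fin n) ℝ → ℝ)
    (grad : Matrix (Fin n) (Fin n) ℝ → Matrix (Fin n) (Fin n) ℝ)
    (β : ℝ) (hβ : 0 < β)
    (hgradSymm : ∀ X : Matrix (Fin n) (Fin n) ℝ, (grad X).IsSymm)
    (hconv : ∀ X Y : Matrix (Fin n) (Fin n) ℝ, X.IsSymm → Y.IsSymm →
      f X + (grad X * (Y - X)).trace ≤ f Y)
    (hsmooth : ∀ X Y : Matrix (Fin n) (Fin n) ℝ, X.IsSymm → Y.IsSymm →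
      frobNorm (grad X - grad Y) ≤ β * frobNorm (X - Y))
    (Xstar : Matrix (Fin n) (Fin n) ℝ)
    (hXstarMem : Xstar ∈ Fantope n k)
    (hXstarOpt : ∀ X ∈ Fantope n k, f Xstar ≤ f X)
    (δ : ℝ) (hδ : 0 < δ)
    (hgap : δ ≤ eigval (grad Xstar) (n - k) - eigval (grad Xstar) (n - k + 1))
    :
    ∀ X ∈ Fantope n k, ∀ V ∈ ProjSet n k,
      (∀ P ∈ ProjSet n k, (V * grad X).trace ≤ (P * grad X).trace) →
      frobNorm (V - Xstar) ^ 2 ≤ 16 * β ^ 2 * (f X - f Xstar) / δ ^ 3 := by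
  intro X hX V hV hmin
  have hherm : (grad Xstar).IsHermitian := by
    rw [Matrix.IsHermitian, real_conjTranspose]
    exact hgradSymm Xstar
  obtain ⟨W, h1, h2, hGdec⟩ := eigen_decomp hherm
  set μ : Fin n → ℝ := hherm.eigenvalues ∘ Tuple.sort hherm.eigenvalues with hμ
  have hmono : Monotone μ := Tuple.monotone_sort _
  have hμgap : δ ≤ μ ⟨k, hkn⟩ - μ ⟨k - 1, by omega⟩ := by
    have e1 : eigval (grad Xstar) (n - k) = μ ⟨k, hkn⟩ := by
      rw [eigval, dif_pos hherm, dif_pos (show n - (n - k) < n by omega)]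
      congr 1
      exact Fin.ext (by simp; omega)
    have e2 : eigval (grad Xstar) (n - k + 1) = μ ⟨k - 1, by omega⟩ := by
      rw [eigval, dif_pos hherm, dif_pos (show n - (n - k + 1) < n by omega)]
      congr 1
      exact Fin.ext (by simp; omega)
    rw [e1, e2] at hgap
    exact hgap
  set P : Matrix (Fin n) (Fin n) ℝ := W * Matrix.diagonal (evec n k) * Wᵀ with hP
  have hPProj : P ∈ ProjSet n k := diagproj_mem_proj hkn.le h1
  have hPFan : P ∈ Fantope n k := proj_mem_fantope hkn.le hPProj
  have hfo := first_order f grad β hβ hconv hsmooth Xstar hXstarMem hXstarOpt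
  -- the transform of the linear functional
  have hinner : ∀ Y : Matrix (Fin n) (Fin n) ℝ,
      (grad Xstar * Y).trace = ∑ i, μ i * (Wᵀ * Y * W) i i := by
    intro Y
    rw [hGdec]
    exact inner_transform μ Y
  have hWPW : Wᵀ * P * W = Matrix.diagonal (evec n k) := by
    rw [hP]
    exact conj_conj h1 _
  have hinnerP : (grad Xstar * P).trace = ∑ i, μ i * evec n k i := by
    rw [hinner P, hWPW]
    congr 1; ext i
    rw [Matrix.diagonal_apply_eq]
  -- Xstar equals P
  have hXP : Xstar = P := by
    set M : Matrix (Fin n) (Fin n) ℝ := Wᵀ * Xstar * W with hM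
    have hMFan : M ∈ Fantope n k := conj_mem_fantope h1 h2 hXstarMem
    have h0 := hfo P hPFan
    rw [Matrix.mul_sub, Matrix.trace_sub, hinnerP, hinner Xstar, ← hM] at h0
    have hcore := core_ineq hk hkn μ hmono hμgap hMFan
    have hs := s_nonneg hMFan
    have hszero : (k:ℝ) - ∑ i, evec n k i * M i i = 0 := by nlinarith
    have hdiag1 : ∀ i : Fin n, (i:ℕ) < k → M i i = 1 := by
      intro i hik
      have hsum0 : ∑ i, evec n k i * (1 - M i i) = 0 := by
        have hexp : ∀ i : Fin n, evec n k i * (1 - M i i) = evec n k i - evec n k i * M i i := by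
          intro i; ring
        simp only [hexp, Finset.sum_sub_distrib]
        rw [sum_evec hkn.le]
        linarith
      have hnn : ∀ j ∈ Finset.univ, (0:ℝ) ≤ evec n k j * (1 - M j j) := by
        intro j _
        exact mul_nonneg (by by_cases h : (j:ℕ) < k <;> simp [evec, h])
          (by linarith [fantope_diag_le_one hMFan j])
      have := (Finset.sum_eq_zero_iff_of_nonneg hnn).mp hsum0 i (Finset.mem_univ i)
      rw [show evec n k i = 1 by simp [evec, hik]] at this
      linarith
    have hMdiag : M = Matrix.diagonal (evec n k) := fantope_eq_diag hkn.le hMFan hdiag1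
    have : W * M * Wᵀ = Xstar := conj_conj' h2 Xstar
    rw [hMdiag] at this
    rw [← this, hP]
  -- quadratic growth
  have hQG : ∀ Y ∈ Fantope n k,
      δ / 2 * frobNorm (Y - Xstar) ^ 2 ≤ (grad Xstar * (Y - Xstar)).trace := by
    intro Y hY
    set M : Matrix (Fin n) (Fin n) ℝ := Wᵀ * Y * W with hM
    have hMFan : M ∈ Fantope n k := conj_mem_fantope h1 h2 hY
    have hinnerX : (grad Xstar * Xstar).trace = ∑ i, μ i * evec n k i := by
      rw [← hinnerP, ← hXP]
    have hinnerdiff : (grad Xstar * (Y - Xstar)).trace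
        = (∑ i, μ i * M i i) - ∑ i, μ i * evec n k i := by
      rw [Matrix.mul_sub, Matrix.trace_sub, hinner Y, ← hM, hinnerX]
    have hfrob : frobNorm (Y - Xstar) = frobNorm (M - Matrix.diagonal (evec n k)) := by
      have hWd : Wᵀ * (Y - Xstar) * W = M - Matrix.diagonal (evec n k) := by
        rw [Matrix.mul_sub, Matrix.sub_mul, hXP, ← hM]
        rw [show Wᵀ * P * W = Matrix.diagonal (evec n k) from hWPW]
      rw [← hWd, frob_conj h1 h2]
    have hcore := core_ineq hk hkn μ hmono hμgap hMFan
    have hfb := frob_bound_diag hkn.le hMFan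
    rw [hinnerdiff, hfrob]
    nlinarith
  -- final assembly
  have hVFan : V ∈ Fantope n k := proj_mem_fantope hkn.le hV
  set a := frobNorm (V - Xstar) with ha
  set b := frobNorm (X - Xstar) with hb
  have ha0 : 0 ≤ a := frobNorm_nonneg _
  have hb0 : 0 ≤ b := frobNorm_nonneg _
  set F := f X - f Xstar with hF
  have hgrowthX : δ / 2 * b ^ 2 ≤ F := by
    have h1' := hQG X hX
    have h2' := hconv Xstar X hXstarMem.1 hX.1
    rw [hF]
    linarith
  have hgrowthV : δ / 2 * a ^ 2 ≤ (grad Xstar * (V - Xstar)).trace := hQG V hVFan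
  have hlin : (grad X * (V - Xstar)).trace ≤ 0 := by
    have hm := hmin Xstar (hXP ▸ hPProj)
    rw [Matrix.mul_sub, Matrix.trace_sub]
    rw [Matrix.trace_mul_comm (grad X) V, Matrix.trace_mul_comm (grad X) Xstar]
    linarith
  have hcs : ((grad Xstar - grad X) * (V - Xstar)).trace ≤ β * b * a := by
    have habs := trace_abs_le (grad Xstar - grad X) (issymm_sub hVFan.1 hXstarMem.1)
    have hsm := hsmooth Xstar X hXstarMem.1 hX.1
    have hfe : frobNorm (Xstar - X) = b := by rw [hb, frob_sub_comm]
    rw [hfe] at hsm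
    rw [abs_le] at habs
    have := habs.2
    calc ((grad Xstar - grad X) * (V - Xstar)).trace
        ≤ frobNorm (grad Xstar - grad X) * frobNorm (V - Xstar) := this
    _ ≤ (β * b) * a := by
        apply mul_le_mul_of_nonneg_right _ ha0
        exact hsm
  have hsplit : (grad Xstar * (V - Xstar)).trace
      = (grad X * (V - Xstar)).trace + ((grad Xstar - grad X) * (V - Xstar)).trace := by
    rw [Matrix.sub_mul, Matrix.trace_sub]
    ring
  have hkey : δ / 2 * a ^ 2 ≤ β * b * a := by
    rw [hsplit] at hgrowthV
    linarith
  have hFnn : 0 ≤ F := by nlinarith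
  rw [le_div_iff₀ (by positivity : (0:ℝ) < δ ^ 3)]
  rcases eq_or_lt_of_le ha0 with haz | hap
  · rw [← haz]
    have : (0:ℝ) ^ 2 * δ ^ 3 = 0 := by ring
    rw [this]
    positivity
  · have hda : δ * a ≤ 2 * β * b := by
      have := hkey
      have h' : δ * a * a ≤ 2 * β * b * a := by nlinarith
      exact le_of_mul_le_mul_right (by nlinarith) hap
    have hsq : (δ * a) ^ 2 ≤ (2 * β * b) ^ 2 := by
      apply sq_le_sq'
      · nlinarith
      · exact hda
    have hstep : δ ^ 2 * a ^ 2 ≤ 4 * β ^ 2 * b ^ 2 := by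
      calc δ ^ 2 * a ^ 2 = (δ * a) ^ 2 := by ring
      _ ≤ (2 * β * b) ^ 2 := hsq
      _ = 4 * β ^ 2 * b ^ 2 := by ring
    have hstep2 : δ ^ 3 * a ^ 2 ≤ 4 * β ^ 2 * (δ * b ^ 2) := by
      have hm := mul_le_mul_of_nonneg_left hstep hδ.le
      calc δ ^ 3 * a ^ 2 = δ * (δ ^ 2 * a ^ 2) := by ring
      _ ≤ δ * (4 * β ^ 2 * b ^ 2) := hm
      _ = 4 * β ^ 2 * (δ * b ^ 2) := by ring
    have hstep3 : δ * b ^ 2 ≤ 2 * F := by linarith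
    have hstep4 : 4 * β ^ 2 * (δ * b ^ 2) ≤ 4 * β ^ 2 * (2 * F) :=
      mul_le_mul_of_nonneg_left hstep3 (by positivity)
    have hβF : 0 ≤ β ^ 2 * F := mul_nonneg (sq_nonneg β) hFnn
    calc a ^ 2 * δ ^ 3 = δ ^ 3 * a ^ 2 := by ring
    _ ≤ 4 * β ^ 2 * (2 * F) := le_trans hstep2 hstep4
    _ ≤ 16 * β ^ 2 * F := by linarith
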